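/- Conjugation by * inverts every element of A_Λ: for all a ∈ A_Λ, one has * ∘ a ∘ * = a⁻¹ in Aut(W,S). -/

import Mathlib

set_option synthInstance.maxHeartbeats 1000000
set_option maxHeartbeats 2000000

open scoped Classical

noncomputable section

namespace LY

/-! ## The coefficient field `ℚ(q)` -/

/-- The field `ℚ(q)` of rational functions. -/
abbrev K : Type := RatFunc ℚ

/-- The indeterminate `q`. -/
def qK : K := RatFunc.X

/-- The inclusion `ℤ[q] → ℚ(q)`. -/
def toK (p : Polynomial ℤ) : K := algebraMap (Polynomial ℚ) K (p.map (Int.castRingHom ℚ))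

/-- Evaluation of `p ∈ ℤ[q]` at `−q`, as an element of `ℚ(q)`; i.e. `p(−q)`. -/
def atNegQ (p : Polynomial ℤ) : K := Polynomial.eval₂ (Int.castRingHom K) (-qK) p

/-- The standard basis element `T_w` (resp. `a_w`) of the function model `W → ℚ(q)`
of the Hecke algebra (resp. of the Lusztig–Vogan module `M`). -/
def TT {W : Type} (w : W) : W → K := fun y => if y = w then 1 else 0

variable {B W : Type} [Group W] {M : CoxeterMatrix B}

/-- The Bruhat order on a Coxeter group: `u ≤ v` iff `v` is obtained from `u` by successive
right multiplications by reflections, each increasing the length. -/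
def BruhatLE (cs : CoxeterSystem M W) (u v : W) : Prop :=
  Relation.ReflTransGen
    (fun a b => cs.length a < cs.length b ∧ ∃ t, cs.IsReflection t ∧ b = a * t) u v

/-- Connectedness of the Coxeter diagram of `M`. -/
def DiagramConnected (M : CoxeterMatrix B) : Prop :=
  ∀ i j : B, Relation.ReflTransGen (fun a b => a ≠ b ∧ M a b ≠ 2) i j

/-- An automorphism of `W` preserving the set `S` of simple reflections, i.e. an element
of `A = Aut(W,S)`. -/
def IsDiagAut (cs : CoxeterSystem M W) (a : MulAut W) : Prop :=
  (⇑a) '' (Set.range cs.simple) = Set.range cs.simple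

/-! ## The affine setting -/

/-- All the data and axioms describing the setting: `(W,S)` is the Coxeter group of an
untwisted connected affine Dynkin diagram (an irreducible affine Weyl group); `Λ` is the
subgroup of translations (elements with finite conjugacy class), free abelian of finite
rank and of finite index; `s₀` is a hyperspecial vertex, `J = S − {s₀}`, `W_J` is the
finite subgroup generated by `J` with longest element `w_J`; `*` is the involution of `W`
given by `w* = w_J w w_J` on `W_J` and `λ* = −(ʷᴶλ)` on `Λ`; `pr` is the projection
`W → W_J` along `Λ`; `ρ` is the conjugation action of `W` on `Λ_ℚ ≅ ℚ^rank`
(via the identification `freeIso` of `Λ` with `ℤ^rank`). -/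
structure AffineData (cs : CoxeterSystem M W) where
  finB : Finite B
  conn : DiagramConnected M
  infW : Infinite W
  /-- the subgroup `Λ` of translations -/
  Lam : Subgroup W
  hLam_mem : ∀ w : W, w ∈ Lam ↔ {x : W | IsConj w x}.Finite
  hLam_normal : Lam.Normal
  hLam_comm : ∀ a ∈ Lam, ∀ b ∈ Lam, a * b = b * a
  hLam_index : Lam.FiniteIndex
  /-- `Λ` is free abelian of finite rank -/
  rank : ℕ
  freeIso : Lam ≃* Multiplicative (Fin rank → ℤ)
  /-- the hyperspecial vertex `s₀` -/
  s0 : W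
  hs0_S : s0 ∈ Set.range cs.simple
  /-- `s₀` is hyperspecial: the projection `W → W/Λ` restricts to an isomorphism from the
  subgroup generated by `S − {s₀}` onto `W/Λ`. -/
  hs0_hyper : ∀ w : W, ∃! u : W,
    u ∈ Subgroup.closure (Set.range cs.simple \ {s0}) ∧ w * u⁻¹ ∈ Lam
  hWJ_fin : (Subgroup.closure (Set.range cs.simple \ {s0}) : Set W).Finite
  /-- the longest element `w_J` of `W_J` -/
  wJ : W
  hwJ_mem : wJ ∈ Subgroup.closure (Set.range cs.simple \ {s0})
  hwJ_max : ∀ u ∈ Subgroup.closure (Set.range cs.simple \ {s0}), cs.length u ≤ cs.length wJ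
  /-- the involution `*` of `W` -/
  st : MulAut W
  hst_inv : ∀ w : W, st (st w) = w
  hst_J : ∀ u ∈ Subgroup.closure (Set.range cs.simple \ {s0}), st u = wJ * u * wJ
  hst_Lam : ∀ l ∈ Lam, st l = (wJ * l * wJ⁻¹)⁻¹
  hst_S : ∀ s ∈ Set.range cs.simple, st s ∈ Set.range cs.simple
  /-- lower Bruhat intervals are finite -/
  hBruhat_fin : ∀ w : W, {y : W | BruhatLE cs y w}.Finite
  /-- the projection `W → W_J` along `Λ` (`w ↦ w̄`) -/
  pr : W → W
  hpr : ∀ w : W, pr w ∈ Subgroup.closure (Set.range cs.simple \ {s0}) ∧ w * (pr w)⁻¹ ∈ Lam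
  /-- the conjugation action of `W` on `Λ_ℚ ≅ ℚ^rank` -/
  rho : W → ((Fin rank → ℚ) →ₗ[ℚ] (Fin rank → ℚ))
  hrho : ∀ (w : W) (l : Lam),
    rho w (fun i => ((Multiplicative.toAdd (freeIso l)) i : ℚ)) =
      fun i => ((Multiplicative.toAdd
        (freeIso ⟨w * (l : W) * w⁻¹, hLam_normal.conj_mem _ l.2 w⟩)) i : ℚ)

namespace AffineData

variable {cs : CoxeterSystem M W} (D : AffineData cs)

/-- The set `J = S − {s₀}`. -/
def Jset : Set W := Set.range cs.simple \ {D.s0}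

/-- The finite Weyl group `W_J`. -/
def WJ : Subgroup W := Subgroup.closure D.Jset

/-- `λ ∈ Λ` is a dominant translation (`λ ∈ Λ⁺`). -/
def IsDominant (l : W) : Prop :=
  l ∈ D.Lam ∧ cs.length (l * D.wJ) = cs.length l + cs.length D.wJ

/-- The embedding `Λ → Λ_ℚ = ℚ^rank`. -/
def iota (l : D.Lam) : Fin D.rank → ℚ :=
  fun i => ((Multiplicative.toAdd (D.freeIso l)) i : ℚ)

/-- `e(A)`: the dimension of the `(−1)`-eigenspace of a linear endomorphism `A` of `Λ_ℚ`. -/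
def eNeg (f : (Fin D.rank → ℚ) →ₗ[ℚ] (Fin D.rank → ℚ)) : ℕ :=
  Module.finrank ℚ (Module.End.eigenspace (f : Module.End ℚ (Fin D.rank → ℚ)) (-1))

/-- The map `A_u : λ ↦ ᵘ(λ*) = −(ᵘʷᴶλ)` on `Λ_ℚ`, for `u ∈ W_J`. -/
def Amap (u : W) : (Fin D.rank → ℚ) →ₗ[ℚ] (Fin D.rank → ℚ) := - D.rho (u * D.wJ)

/-- The invariant `φ(w) = e(A_{w̄}) − e(A_e)` for `w ∈ I_*`. -/
def phi (w : W) : ℤ := (D.eNeg (D.Amap (D.pr w)) : ℤ) - (D.eNeg (D.Amap 1) : ℤ)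

/-- The double coset `W_J x W_J`. -/
def DCoset (x : W) : Set W := {y : W | ∃ u ∈ D.WJ, ∃ v ∈ D.WJ, y = u * x * v}

/-- The set `H = J ∩ bJb⁻¹`. -/
def Hset (b : W) : Set W := D.Jset ∩ ((fun s => b * s * b⁻¹) '' D.Jset)

/-- The set `H* ⊆ J`, image of `H` under `*`. -/
def Hstar (b : W) : Set W := (⇑D.st) '' D.Hset b

/-- The subgroup `W_{H*}` generated by `H*`. -/
def WHstar (b : W) : Subgroup W := Subgroup.closure (D.Hstar b)

/-- The reflection representation `R'` of `W_{H*}`, as a subspace of `Λ_ℚ`: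
the span of the vectors `λ − ˢλ` for `λ ∈ Λ`, `s ∈ H*`. -/
def Rprime (b : W) : Submodule ℚ (Fin D.rank → ℚ) :=
  Submodule.span ℚ
    {v : Fin D.rank → ℚ | ∃ l : D.Lam, ∃ s ∈ D.Hstar b,
      v = D.iota l - D.iota ⟨s * (l : W) * s⁻¹, D.hLam_normal.conj_mem _ l.2 s⟩}

/-- `e'(A)`: the dimension of the `(−1)`-eigenspace of an endomorphism `A` of `R'`. -/
def eNeg' {b : W} (f : ↥(D.Rprime b) →ₗ[ℚ] ↥(D.Rprime b)) : ℕ :=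
  Module.finrank ℚ (Module.End.eigenspace (f : Module.End ℚ ↥(D.Rprime b)) (-1))

/-- `φ'(z) = e'(B_z) − e'(B_e)`, where `B_u : x ↦ −u·(w_{H*}·x)` on `R'`; here
`rho'` is the conjugation action of `W_{H*}` on `R'` and `wHs` is the longest element
of `W_{H*}`. -/
def phiP {b : W} (rho' : W → (↥(D.Rprime b) →ₗ[ℚ] ↥(D.Rprime b))) (wHs z : W) : ℤ :=
  (D.eNeg' (-(rho' (z * wHs))) : ℤ) - (D.eNeg' (-(rho' wHs)) : ℤ)

/-- Membership in `A_Λ ⊆ A = Aut(W,S)`: automorphisms acting on `Λ` as conjugation by some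
element of `W_J`. -/
def InALam (a : MulAut W) : Prop :=
  IsDiagAut cs a ∧ ∃ w ∈ D.WJ, ∀ l ∈ D.Lam, a l = w * l * w⁻¹

/-- Membership in the coset `A_Λ* = {a ∘ * : a ∈ A_Λ}`. -/
def InALamStar (c : MulAut W) : Prop := ∃ a : MulAut W, D.InALam a ∧ c = a * D.st

/-- The double coset `W_J x W_J^◇`, where `W_J^◇` is the subgroup generated by
`J^◇ = S − {s₁}`. -/
def DCosetDia (s1 : W) (x : W) : Set W :=
  {y : W | ∃ u ∈ D.WJ, ∃ v ∈ Subgroup.closure (Set.range cs.simple \ {s1}), y = u * x * v}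


end AffineData

/-! ## The Hecke algebra, the Lusztig–Vogan module, and the polynomials `P`, `P^σ` -/

/-- The Hecke algebra of `(W,S)` over `ℚ(q)` (modelled on functions `W → ℚ(q)`, with basis
`TT w = T_w`), together with its bar involution, and the Kazhdan–Lusztig polynomials
`P_{y,w} ∈ ℤ[q]` characterized by their defining properties. -/
structure HeckeData (cs : CoxeterSystem M W) where
  /-- the involution `q ↦ q⁻¹` of `ℚ(q)` -/
  barK : K →+* K
  hbarK_X : barK qK = qK⁻¹
  hbarK_inv : ∀ x, barK (barK x) = x
  /-- the multiplication of the Hecke algebra -/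
  mulH : (W → K) →ₗ[K] (W → K) →ₗ[K] (W → K)
  hmul_assoc : ∀ x y z : W → K, mulH (mulH x y) z = mulH x (mulH y z)
  hmul_one : ∀ x : W → K, mulH (TT 1) x = x ∧ mulH x (TT 1) = x
  hmul_TT : ∀ u v : W, cs.length (u * v) = cs.length u + cs.length v →
    mulH (TT u) (TT v) = TT (u * v)
  hmul_Ts : ∀ s ∈ Set.range cs.simple,
    mulH (TT s) (TT s) = (qK - 1) • TT s + qK • TT (1 : W)
  /-- the bar involution of the Hecke algebra: the ring involution with `q ↦ q⁻¹`,
  `T_w ↦ (T_{w⁻¹})⁻¹` -/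
  barH : (W → K) →+ (W → K)
  hbarH_inv : ∀ x, barH (barH x) = x
  hbarH_smul : ∀ (c : K) (x : W → K), barH (c • x) = barK c • barH x
  hbarH_mul : ∀ x y : W → K, barH (mulH x y) = mulH (barH x) (barH y)
  hbarH_T : ∀ w : W, mulH (barH (TT w)) (TT w⁻¹) = TT (1 : W) ∧
    mulH (TT w⁻¹) (barH (TT w)) = TT (1 : W)
  /-- the Kazhdan–Lusztig polynomials `P_{y,w}` -/
  P : W → W → Polynomial ℤ
  hP_supp : ∀ y w : W, ¬ BruhatLE cs y w → P y w = 0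
  hP_diag : ∀ w : W, P w w = 1
  hP_deg : ∀ y w : W, BruhatLE cs y w → y ≠ w →
    2 * (P y w).natDegree + 1 ≤ cs.length w - cs.length y
  hP_dual : ∀ w : W,
    (qK ^ cs.length w) • barH (fun y => if BruhatLE cs y w then toK (P y w) else 0)
      = fun y => if BruhatLE cs y w then toK (P y w) else 0

/-- The Lusztig–Vogan module `M` over the Hecke algebra `H'` with parameter `q²`, attached to
a length-preserving involutive automorphism `star` of `(W,S)`, together with its bar
involution, and the polynomials `P^σ_{y,w} ∈ ℤ[q]` (for `y, w ∈ I_*`) characterized by their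
defining properties.  Both `H'` and `M` are modelled on functions `W → ℚ(q)`; the basis
element `a_w` of `M` (for `w ∈ I_*`) is `TT w`. -/
structure LVData (cs : CoxeterSystem M W) (star : MulAut W) where
  /-- the involution `q ↦ q⁻¹` of `ℚ(q)` -/
  barK : K →+* K
  hbarK_X : barK qK = qK⁻¹
  hbarK_inv : ∀ x, barK (barK x) = x
  /-- the multiplication of the Hecke algebra `H'` with parameter `q²` -/
  mulH' : (W → K) →ₗ[K] (W → K) →ₗ[K] (W → K)
  hmul'_assoc : ∀ x y z : W → K, mulH' (mulH' x y) z = mulH' x (mulH' y z)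
  hmul'_one : ∀ x : W → K, mulH' (TT 1) x = x ∧ mulH' x (TT 1) = x
  hmul'_TT : ∀ u v : W, cs.length (u * v) = cs.length u + cs.length v →
    mulH' (TT u) (TT v) = TT (u * v)
  hmul'_Ts : ∀ s ∈ Set.range cs.simple,
    mulH' (TT s) (TT s) = (qK ^ 2 - 1) • TT s + (qK ^ 2) • TT (1 : W)
  /-- the bar involution of `H'` -/
  barH' : (W → K) →+ (W → K)
  hbarH'_inv : ∀ x, barH' (barH' x) = x
  hbarH'_smul : ∀ (c : K) (x : W → K), barH' (c • x) = barK c • barH' x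
  hbarH'_mul : ∀ x y : W → K, barH' (mulH' x y) = mulH' (barH' x) (barH' y)
  hbarH'_T : ∀ w : W, mulH' (barH' (TT w)) (TT w⁻¹) = TT (1 : W) ∧
    mulH' (TT w⁻¹) (barH' (TT w)) = TT (1 : W)
  /-- the action of `H'` on the module `M` -/
  actM : (W → K) →ₗ[K] (W → K) →ₗ[K] (W → K)
  hact_one : ∀ m : W → K, actM (TT 1) m = m
  hact_mul : ∀ (h h' : W → K) (m : W → K), actM (mulH' h h') m = actM h (actM h' m)
  hact1 : ∀ s ∈ Set.range cs.simple, ∀ w : W, star w = w⁻¹ →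
    s * w = w * star s → cs.length w < cs.length (s * w) →
    actM (TT s) (TT w) = qK • TT w + (qK + 1) • TT (s * w)
  hact2 : ∀ s ∈ Set.range cs.simple, ∀ w : W, star w = w⁻¹ →
    s * w = w * star s → cs.length (s * w) < cs.length w →
    actM (TT s) (TT w) = (qK ^ 2 - qK - 1) • TT w + (qK ^ 2 - qK) • TT (s * w)
  hact3 : ∀ s ∈ Set.range cs.simple, ∀ w : W, star w = w⁻¹ →
    s * w ≠ w * star s → cs.length w < cs.length (s * w) →
    actM (TT s) (TT w) = TT (s * w * star s)
  hact4 : ∀ s ∈ Set.range cs.simple, ∀ w : W, star w = w⁻¹ →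
    s * w ≠ w * star s → cs.length (s * w) < cs.length w →
    actM (TT s) (TT w) = (qK ^ 2 - 1) • TT w + (qK ^ 2) • TT (s * w * star s)
  /-- the bar involution of the module `M` -/
  barM : (W → K) →+ (W → K)
  hbarM_inv : ∀ m : W → K, barM (barM m) = m
  hbarM_smul : ∀ (c : K) (m : W → K), barM (c • m) = barK c • barM m
  hbarM_act : ∀ (h m : W → K), barM (actM h m) = actM (barH' h) (barM m)
  hbarM_one : barM (TT 1) = TT (1 : W)
  /-- the Lusztig–Vogan polynomials `P^σ_{y,w}` -/
  Psig : W → W → Polynomial ℤ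
  hPsig_supp : ∀ y w : W, ¬ (BruhatLE cs y w ∧ star y = y⁻¹) → Psig y w = 0
  hPsig_diag : ∀ w : W, star w = w⁻¹ → Psig w w = 1
  hPsig_deg : ∀ y w : W, star w = w⁻¹ → star y = y⁻¹ → BruhatLE cs y w → y ≠ w →
    2 * (Psig y w).natDegree + 1 ≤ cs.length w - cs.length y
  hPsig_dual : ∀ w : W, star w = w⁻¹ →
    (qK ^ (2 * cs.length w)) •
        barM (fun y => if BruhatLE cs y w ∧ star y = y⁻¹ then toK (Psig y w) else 0)
      = fun y => if BruhatLE cs y w ∧ star y = y⁻¹ then toK (Psig y w) else 0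

/-! ## The `Z`-polynomials -/

/-- `Z_w(q) = Σ_{y ≤ w} P_{y,w}(q) q^{ℓ(y)}`. -/
def Zpoly (cs : CoxeterSystem M W) (HD : HeckeData cs) (w : W) : K :=
  ∑ᶠ y : W, if BruhatLE cs y w then toK (HD.P y w) * qK ^ cs.length y else 0

/-- `Z_w(−q) = Σ_{y ≤ w} P_{y,w}(−q) (−q)^{ℓ(y)}`. -/
def ZpolyNeg (cs : CoxeterSystem M W) (HD : HeckeData cs) (w : W) : K :=
  ∑ᶠ y : W, if BruhatLE cs y w then atNegQ (HD.P y w) * (-qK) ^ cs.length y else 0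

/-- `Z^σ_w(q) = Σ_{y ≤ w, y ∈ I_*} P^σ_{y,w}(q) q^{ℓ(y)} ((q−1)/(q+1))^{φ(y)}`. -/
def Zsig (cs : CoxeterSystem M W) (D : AffineData cs) (LD : LVData cs D.st) (w : W) : K :=
  ∑ᶠ y : W, if BruhatLE cs y w ∧ D.st y = y⁻¹ then
    toK (LD.Psig y w) * qK ^ cs.length y * ((qK - 1) / (qK + 1)) ^ D.phi y else 0
namespace LYAux

open CoxeterSystem List

variable {B W : Type} [Group W] {M : CoxeterMatrix B} (cs : CoxeterSystem M W)

local prefix:100 "σ" => cs.simple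
local prefix:100 "π" => cs.wordProd
local prefix:100 "ℓ" => cs.length

lemma zmod2_cases (x : ZMod 2) : x = 0 ∨ x = 1 := by revert x; decide

lemma zmod2_add_self (x : ZMod 2) : x + x = 0 := by revert x; decide

/-- The underlying function of the sign-permutation attached to a simple reflection. -/
def phiFun (i : B) : W × ZMod 2 → W × ZMod 2 :=
  fun p => (σ i * p.1 * σ i, p.2 + if p.1 = σ i then 1 else 0)

lemma simple_conj_eq_simple_iff (i : B) (x : W) :
    σ i * x * σ i = σ i ↔ x = σ i := by
  constructor
  · intro hh
    have h1 : (σ i * x) * σ i = 1 * σ i := by rw [hh, one_mul]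
    have h2 : σ i * x = 1 := mul_right_cancel h1
    have h3 : x = (σ i)⁻¹ := eq_inv_of_mul_eq_one_right h2
    rw [h3, cs.inv_simple]
  · intro hh
    rw [hh, cs.simple_mul_simple_self, one_mul]

lemma phiFun_invol (i : B) : Function.Involutive (phiFun cs i) := by
  intro p
  unfold phiFun
  have h : σ i * σ i = 1 := cs.simple_mul_simple_self i
  rw [Prod.ext_iff]
  refine ⟨?_, ?_⟩
  · show σ i * (σ i * p.1 * σ i) * σ i = p.1
    simp only [← mul_assoc, h, one_mul]
    rw [mul_assoc, h, mul_one]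
  · show (p.2 + if p.1 = σ i then 1 else 0) + (if σ i * p.1 * σ i = σ i then (1:ZMod 2) else 0)
      = p.2
    rw [if_congr (simple_conj_eq_simple_iff cs i p.1) rfl rfl, add_assoc]
    rcases ite_eq_or_eq (p.1 = σ i) (1:ZMod 2) 0 with h1 | h1 <;>
      rw [h1] <;> simp [zmod2_add_self]

/-- The sign-permutation attached to a simple reflection. -/
def phiP (i : B) : Equiv.Perm (W × ZMod 2) := (phiFun_invol cs i).toPerm

lemma phiP_apply (i : B) (p : W × ZMod 2) :
    phiP cs i p = (σ i * p.1 * σ i, p.2 + if p.1 = σ i then 1 else 0) := rfl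

lemma simple_mul_pow (i j : B) (k : ℕ) :
    σ j * (σ i * σ j) ^ k = (σ j * σ i) ^ k * σ j := by
  induction k with
  | zero => simp
  | succ k ih =>
      calc σ j * (σ i * σ j) ^ (k+1)
          = σ j * (σ i * σ j * (σ i * σ j) ^ k) := by rw [pow_succ']
        _ = σ j * σ i * (σ j * (σ i * σ j) ^ k) := by
              rw [← mul_assoc, ← mul_assoc, mul_assoc (σ j * σ i)]
        _ = σ j * σ i * ((σ j * σ i) ^ k * σ j) := by rw [ih]
        _ = σ j * σ i * (σ j * σ i) ^ k * σ j := by rw [← mul_assoc]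
        _ = (σ j * σ i) ^ (k+1) * σ j := by rw [← pow_succ']

lemma phi_pow_apply (i j : B) (k : ℕ) (w : W) (ε : ZMod 2) :
    ((phiP cs i * phiP cs j) ^ k) (w, ε) =
      ((σ i * σ j) ^ k * w * ((σ i * σ j) ^ k)⁻¹,
        ε + ∑ l ∈ Finset.range (2 * k),
          (if w = (σ j * σ i) ^ l * σ j then (1 : ZMod 2) else 0)) := by
  induction k with
  | zero => simp
  | succ k ih =>
      rw [pow_succ', Equiv.Perm.mul_apply, ih, Equiv.Perm.mul_apply, phiP_apply, phiP_apply]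
      have hq : ((σ i * σ j) ^ k)⁻¹ = (σ j * σ i) ^ k := by
        rw [← inv_pow]
        congr 1
        rw [mul_inv_rev, cs.inv_simple, cs.inv_simple]
      have hconj : ∀ (y : W), ((σ i * σ j) ^ k * w * ((σ i * σ j) ^ k)⁻¹ = y)
          ↔ (w = ((σ i * σ j) ^ k)⁻¹ * y * (σ i * σ j) ^ k) := by
        intro y
        constructor
        · intro hh; rw [← hh]; group
        · intro hh; rw [hh]; group
      rw [Prod.ext_iff]
      refine ⟨?_, ?_⟩
      · show σ i * (σ j * ((σ i * σ j) ^ k * w * ((σ i * σ j) ^ k)⁻¹) * σ j) * σ i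
            = (σ i * σ j) ^ (k+1) * w * ((σ i * σ j) ^ (k+1))⁻¹
        rw [pow_succ', mul_inv_rev, mul_inv_rev, cs.inv_simple, cs.inv_simple]
        simp only [mul_assoc]
      · show (ε + ∑ l ∈ Finset.range (2 * k),
              (if w = (σ j * σ i) ^ l * σ j then (1 : ZMod 2) else 0))
            + (if (σ i * σ j) ^ k * w * ((σ i * σ j) ^ k)⁻¹ = σ j then (1:ZMod 2) else 0)
            + (if σ j * ((σ i * σ j) ^ k * w * ((σ i * σ j) ^ k)⁻¹) * σ j = σ i
                then (1:ZMod 2) else 0)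
            = ε + ∑ l ∈ Finset.range (2 * (k+1)),
              (if w = (σ j * σ i) ^ l * σ j then (1 : ZMod 2) else 0)
        have e1 : ((σ i * σ j) ^ k * w * ((σ i * σ j) ^ k)⁻¹ = σ j)
            ↔ (w = (σ j * σ i) ^ (2*k) * σ j) := by
          rw [hconj (σ j), hq]
          have : (σ j * σ i) ^ k * σ j * (σ i * σ j) ^ k
              = (σ j * σ i) ^ (2*k) * σ j := by
            rw [mul_assoc, simple_mul_pow cs i j k, ← mul_assoc, ← pow_add, two_mul]
          rw [this]
        have e2 : (σ j * ((σ i * σ j) ^ k * w * ((σ i * σ j) ^ k)⁻¹) * σ j = σ i)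
            ↔ (w = (σ j * σ i) ^ (2*k+1) * σ j) := by
          have hs : σ j * σ j = 1 := cs.simple_mul_simple_self j
          have cancel : ∀ x : W, σ j * (σ j * x * σ j) * σ j = x := by
            intro x
            simp only [← mul_assoc, hs, one_mul]
            rw [mul_assoc, hs, mul_one]
          have lhs_iff : (σ j * ((σ i * σ j) ^ k * w * ((σ i * σ j) ^ k)⁻¹) * σ j = σ i)
              ↔ ((σ i * σ j) ^ k * w * ((σ i * σ j) ^ k)⁻¹ = σ j * σ i * σ j) := by
            constructor
            · intro hh
              have := congrArg (fun y => σ j * y * σ j) hh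
              rw [cancel] at this
              rw [this]
            · intro hh
              rw [hh]
              exact cancel (σ i)
          rw [lhs_iff, hconj (σ j * σ i * σ j), hq]
          have key : (σ j * σ i) ^ k * (σ j * σ i * σ j) * (σ i * σ j) ^ k
              = (σ j * σ i) ^ (2*k+1) * σ j := by
            have h3 : (σ j * σ i) ^ k * (σ j * σ i * σ j) * (σ i * σ j) ^ k
                = (σ j * σ i) ^ (k+1) * (σ j * (σ i * σ j) ^ k) := by
              rw [pow_succ]
              simp only [mul_assoc]
            rw [h3, simple_mul_pow cs i j k, ← mul_assoc, ← pow_add]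
            congr 2
            omega
          rw [key]
        rw [if_congr e1 rfl rfl, if_congr e2 rfl rfl]
        have h2k : 2 * (k + 1) = (2 * k) + 1 + 1 := by omega
        rw [h2k, Finset.sum_range_succ, Finset.sum_range_succ]
        simp only [add_assoc]

lemma phi_liftable : CoxeterMatrix.IsLiftable M (phiP cs) := by
  intro i j
  refine Equiv.ext fun p => ?_
  · obtain ⟨w, ε⟩ := p
    rw [phi_pow_apply cs i j (M i j) w ε]
    have h1 : (σ i * σ j) ^ (M i j) = 1 := cs.simple_mul_simple_pow i j
    have h2 : (σ j * σ i) ^ (M i j) = 1 := cs.simple_mul_simple_pow' i j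
    have hsum : ∑ l ∈ Finset.range (2 * M i j),
        (if w = (σ j * σ i) ^ l * σ j then (1 : ZMod 2) else 0) = 0 := by
      set m := M i j with hm
      set f : ℕ → ZMod 2 := fun l => (if w = (σ j * σ i) ^ l * σ j then (1 : ZMod 2) else 0)
        with hf
      have hper : ∀ l, f (m + l) = f l := by
        intro l
        simp only [hf, pow_add, h2, one_mul]
      have h2m : 2 * m = m + m := by omega
      rw [h2m, ← Finset.sum_range_add_sum_Ico f (Nat.le_add_right m m),
        Finset.sum_Ico_eq_sum_range]
      simp only [Nat.add_sub_cancel_left, hper]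
      exact zmod2_add_self _
    rw [h1, hsum]
    show ((1:W) * w * (1:W)⁻¹, ε + 0) = (1 : Equiv.Perm (W × ZMod 2)) (w, ε)
    rw [Equiv.Perm.one_apply]
    rw [Prod.ext_iff]
    constructor
    · show (1:W) * w * (1:W)⁻¹ = w
      simp
    · show ε + 0 = ε
      rw [add_zero]

/-- The sign representation `W →* Perm (W × ZMod 2)`. -/
def Theta : W →* Equiv.Perm (W × ZMod 2) := cs.lift ⟨phiP cs, phi_liftable cs⟩

lemma Theta_simple (i : B) : Theta cs (σ i) = phiP cs i :=
  cs.lift_apply_simple (phi_liftable cs) i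

/-- The sign cocycle. -/
def eta (w t : W) : ZMod 2 := ((Theta cs w) (t, 0)).2

lemma theta_apply (w t : W) (ε : ZMod 2) :
    (Theta cs w) (t, ε) = (w * t * w⁻¹, ε + eta cs w t) := by
  have key : ∀ (w : W), ∀ (t : W) (ε : ZMod 2),
      (Theta cs w) (t, ε) = (w * t * w⁻¹, ε + ((Theta cs w) (t, 0)).2) := by
    intro w
    induction w using cs.simple_induction_left with
    | one => intro t ε; simp
    | mul_simple_left v i ih =>
        intro t ε
        have h2 : ((phiP cs i * Theta cs v) (t, 0)).2
            = (((Theta cs v) (t, 0)).2) + (if v * t * v⁻¹ = σ i then (1:ZMod 2) else 0) := by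
          rw [Equiv.Perm.mul_apply, ih t 0, phiP_apply]
        rw [map_mul, Equiv.Perm.mul_apply, ih t ε, Theta_simple, phiP_apply]
        dsimp only
        rw [Prod.ext_iff]
        refine ⟨?_, ?_⟩
        · dsimp only
          show σ i * (v * t * v⁻¹) * σ i = (σ i * v) * t * (σ i * v)⁻¹
          rw [mul_inv_rev, cs.inv_simple]
          group
        · dsimp only
          rw [h2, add_assoc]
  rw [key w t ε]; rfl

lemma eta_mul (u v t : W) : eta cs (u * v) t = eta cs v t + eta cs u (v * t * v⁻¹) := by
  have h1 : (Theta cs (u * v)) (t, 0) = ((u*v) * t * (u*v)⁻¹, 0 + eta cs (u*v) t) :=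
    theta_apply cs (u*v) t 0
  have h2 : (Theta cs (u * v)) (t, 0)
      = (u * (v * t * v⁻¹) * u⁻¹, (0 + eta cs v t) + eta cs u (v * t * v⁻¹)) := by
    rw [map_mul, Equiv.Perm.mul_apply, theta_apply cs v t 0, theta_apply]
  rw [h1] at h2
  have := congrArg Prod.snd h2
  simpa using this

lemma eta_simple (i : B) (t : W) :
    eta cs (σ i) t = if t = σ i then 1 else 0 := by
  unfold eta
  rw [Theta_simple, phiP_apply]
  simp

lemma eta_one (t : W) : eta cs 1 t = 0 := by
  unfold eta; simp

lemma eta_mem_rightInvSeq (ω : List B) (t : W) (h : eta cs (π ω) t = 1) :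
    t ∈ cs.rightInvSeq ω := by
  induction ω with
  | nil =>
      rw [cs.wordProd_nil, eta_one] at h
      exact absurd h (by decide)
  | cons i ω ih =>
      rw [cs.wordProd_cons, eta_mul, eta_simple] at h
      have hris : cs.rightInvSeq (i :: ω) = ((π ω)⁻¹ * (σ i) * (π ω)) :: cs.rightInvSeq ω :=
        rfl
      rw [hris, List.mem_cons]
      by_cases hc : (π ω) * t * (π ω)⁻¹ = σ i
      · refine Or.inl ?_
        calc t = (π ω)⁻¹ * ((π ω) * t * (π ω)⁻¹) * (π ω) := by group
          _ = (π ω)⁻¹ * σ i * (π ω) := by rw [hc]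
      · refine Or.inr ?_
        rw [if_neg hc, add_zero] at h
        exact ih h

lemma eta_eq_one_of_lt (w t : W) (ht : cs.IsReflection t) (h : ℓ (w * t) < ℓ w) :
    eta cs w t = 1 := by
  have forward : ∀ (v : W), eta cs v t = 1 → ℓ (v * t) < ℓ v := by
    intro v hv
    obtain ⟨ω, hred, hw⟩ := cs.exists_reduced_word' v
    rw [hw]
    exact (cs.isRightInversion_of_mem_rightInvSeq hred
      (eta_mem_rightInvSeq cs ω t (hw ▸ hv))).2
  have eta_self : eta cs t t = 1 := by
    obtain ⟨u, i, rfl⟩ := ht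
    set t := u * σ i * u⁻¹ with hT
    have h1 : eta cs (u * σ i) (σ i) = 1 + eta cs u (σ i) := by
      have h0 := eta_mul cs u (σ i) (σ i)
      rw [eta_simple, if_pos rfl] at h0
      have hx : σ i * σ i * (σ i)⁻¹ = σ i := by
        rw [cs.simple_mul_simple_self, cs.inv_simple, one_mul]
      rw [hx] at h0
      rw [h0, add_comm]
    have h2 : eta cs u⁻¹ t = eta cs u (σ i) := by
      have h0 : eta cs (u * u⁻¹) t = 0 := by rw [mul_inv_cancel, eta_one]
      rw [eta_mul] at h0
      have hsimpl : u⁻¹ * t * u⁻¹⁻¹ = σ i := by rw [hT]; group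
      rw [hsimpl] at h0
      rcases zmod2_cases (eta cs u⁻¹ t) with h3 | h3 <;>
        rcases zmod2_cases (eta cs u (σ i)) with h4 | h4 <;>
          rw [h3, h4] <;> rw [h3, h4] at h0 <;> first | rfl | (exfalso; revert h0; decide)
    have h3 : eta cs t t = eta cs u⁻¹ t + eta cs (u * σ i) (σ i) := by
      have h4 := eta_mul cs (u * σ i) u⁻¹ t
      have hsimpl : u⁻¹ * t * u⁻¹⁻¹ = σ i := by rw [hT]; group
      rw [hsimpl] at h4
      have h5 : (u * σ i) * u⁻¹ = t := by rw [hT]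
      rw [h5] at h4
      exact h4
    rw [h3, h2, h1]
    rcases zmod2_cases (eta cs u (σ i)) with h4 | h4 <;> rw [h4] <;> decide
  have hts : t * t = 1 := ht.mul_self
  have h4 : eta cs ((w * t) * t) t = eta cs t t + eta cs (w * t) (t * t * t⁻¹) :=
    eta_mul cs (w * t) t t
  have h5 : t * t * t⁻¹ = t := by rw [mul_assoc, mul_inv_cancel, mul_one]
  rw [h5, eta_self] at h4
  have h6 : eta cs (w * t) t = 0 := by
    rcases zmod2_cases (eta cs (w * t) t) with h7 | h7
    · exact h7
    · exfalso
      have h8 := forward (w * t) h7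
      rw [mul_assoc, hts, mul_one] at h8
      omega
  rw [h6, add_zero] at h4
  have hw : w = (w * t) * t := by rw [mul_assoc, hts, mul_one]
  rw [hw]
  exact h4

lemma eta_iff (w t : W) (ht : cs.IsReflection t) :
    eta cs w t = 1 ↔ ℓ (w * t) < ℓ w := by
  constructor
  · intro hv
    obtain ⟨ω, hred, hw⟩ := cs.exists_reduced_word' w
    rw [hw]
    exact (cs.isRightInversion_of_mem_rightInvSeq hred
      (eta_mem_rightInvSeq cs ω t (hw ▸ hv))).2
  · exact eta_eq_one_of_lt cs w t ht

/-! ### Conjugation by an element normalizing the simple reflections -/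

section Normalizer

variable {g : W}

lemma conj_wordProd (φ : B → B) (hφ : ∀ i, g * σ i * g⁻¹ = σ (φ i)) (ω : List B) :
    g * (π ω) * g⁻¹ = π (ω.map φ) := by
  induction ω with
  | nil => simp
  | cons i ω ih =>
      rw [List.map_cons, cs.wordProd_cons, cs.wordProd_cons, ← hφ i, ← ih]
      group

lemma length_conj_le (hg : ∀ i : B, ∃ j : B, g * σ i * g⁻¹ = σ j) (w : W) :
    ℓ (g * w * g⁻¹) ≤ ℓ w := by
  classical
  choose φ hφ using hg
  obtain ⟨ω, hred, hw⟩ := cs.exists_reduced_word' w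
  rw [hw, conj_wordProd cs φ hφ ω]
  calc ℓ (π (ω.map φ)) ≤ (ω.map φ).length := cs.length_wordProd_le _
    _ = ω.length := List.length_map _
    _ = ℓ (π ω) := hred.symm

lemma length_conj (hg : ∀ i : B, ∃ j : B, g * σ i * g⁻¹ = σ j)
    (hg' : ∀ i : B, ∃ j : B, g⁻¹ * σ i * g = σ j) (w : W) :
    ℓ (g * w * g⁻¹) = ℓ w := by
  refine le_antisymm (length_conj_le cs hg w) ?_
  have h2 := length_conj_le cs (g := g⁻¹) (by simpa using hg') (g * w * g⁻¹)
  have h3 : g⁻¹ * (g * w * g⁻¹) * g⁻¹⁻¹ = w := by group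
  rw [h3] at h2
  exact h2

/-- If `g` normalizes the set of simple reflections, then the `η`-value of `g` at a
reflection only depends on the conjugacy class of the reflection. -/
lemma eta_conj_inv (hg : ∀ i : B, ∃ j : B, g * σ i * g⁻¹ = σ j)
    (hg' : ∀ i : B, ∃ j : B, g⁻¹ * σ i * g = σ j)
    (t : W) (ht : cs.IsReflection t) (u : W) :
    eta cs g (u * t * u⁻¹) = eta cs g t := by
  have hL : ∀ y : W, ℓ (g * y * g⁻¹) = ℓ y := length_conj cs hg hg'
  -- eta (g * u) t computed two ways
  have e1 : eta cs (g * u) t = eta cs u t + eta cs g (u * t * u⁻¹) := eta_mul cs g u t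
  have hgu : g * u = (g * u * g⁻¹) * g := by group
  have e2 : eta cs ((g * u * g⁻¹) * g) t
      = eta cs g t + eta cs (g * u * g⁻¹) (g * t * g⁻¹) := eta_mul cs (g*u*g⁻¹) g t
  have e3 : eta cs (g * u * g⁻¹) (g * t * g⁻¹) = eta cs u t := by
    have htc : cs.IsReflection (g * t * g⁻¹) := ht.conj g
    have hlen : ℓ ((g * u * g⁻¹) * (g * t * g⁻¹)) < ℓ (g * u * g⁻¹) ↔ ℓ (u * t) < ℓ u := by
      have hx : (g * u * g⁻¹) * (g * t * g⁻¹) = g * (u * t) * g⁻¹ := by group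
      rw [hx, hL (u * t), hL u]
    rcases zmod2_cases (eta cs (g * u * g⁻¹) (g * t * g⁻¹)) with h1 | h1 <;>
      rcases zmod2_cases (eta cs u t) with h2 | h2 <;> rw [h1, h2]
    · exfalso
      have := (eta_iff cs u t ht).mp h2
      have h3 := (eta_iff cs (g*u*g⁻¹) (g*t*g⁻¹) htc).not.mp (by rw [h1]; decide)
      rw [hlen] at h3
      omega
    · exfalso
      have h4 := (eta_iff cs (g*u*g⁻¹) (g*t*g⁻¹) htc).mp h1
      rw [hlen] at h4
      have := (eta_iff cs u t ht).not.mp (by rw [h2]; decide)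
      omega
  rw [← hgu, e1] at e2
  rw [e3] at e2
  -- e2 : eta u t + eta g (u t u⁻¹) = eta g t + eta u t
  rcases zmod2_cases (eta cs u t) with h1 | h1 <;>
    rcases zmod2_cases (eta cs g (u * t * u⁻¹)) with h2 | h2 <;>
      rcases zmod2_cases (eta cs g t) with h3 | h3 <;>
        rw [h1, h2, h3] at e2 <;> rw [h2, h3] <;> first | rfl | (exfalso; revert e2; decide)

/-- Key theorem: if `g ≠ 1` normalizes the set of simple reflections, then some simple
reflection has a finite conjugacy class. -/
theorem exists_finite_class_of_normalizes
    (hg : ∀ i : B, ∃ j : B, g * σ i * g⁻¹ = σ j)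
    (hg' : ∀ i : B, ∃ j : B, g⁻¹ * σ i * g = σ j)
    (hg1 : g ≠ 1) :
    ∃ i : B, {x : W | IsConj (σ i) x}.Finite := by
  obtain ⟨i, hi⟩ := cs.exists_rightDescent_of_ne_one hg1
  refine ⟨i, ?_⟩
  have h0 : eta cs g (σ i) = 1 :=
    (eta_iff cs g (σ i) (cs.isReflection_simple i)).mpr hi
  obtain ⟨ω, hred, hw⟩ := cs.exists_reduced_word' g
  have hsub : {x : W | IsConj (σ i) x} ⊆ {x : W | x ∈ cs.rightInvSeq ω} := by
    intro x hx
    obtain ⟨c, hc⟩ := isConj_iff.mp hx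
    have h1 : eta cs g x = 1 := by
      rw [← hc, eta_conj_inv cs hg hg' (σ i) (cs.isReflection_simple i) c]
      exact h0
    exact eta_mem_rightInvSeq cs ω x (by rw [← hw]; exact h1)
  exact Set.Finite.subset (cs.rightInvSeq ω).finite_toSet hsub

end Normalizer

end LYAux


section StarProofAux

open LYAux

namespace AffineData

variable {cs : CoxeterSystem M W} (D : AffineData cs)

/-! #### Basic lemmas on `Λ` -/

lemma mem_Lam_map (b : MulAut W) {l : W} (hl : l ∈ D.Lam) : b l ∈ D.Lam := by
  rw [D.hLam_mem] at hl ⊢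
  have himg : {x : W | IsConj (b l) x} = (⇑b) '' {x : W | IsConj l x} := by
    ext x
    constructor
    · intro hx
      obtain ⟨c, hc⟩ := isConj_iff.mp hx
      refine ⟨b.symm c * l * (b.symm c)⁻¹, isConj_iff.mpr ⟨b.symm c, rfl⟩, ?_⟩
      rw [map_mul, map_mul, map_inv]
      simp only [MulEquiv.apply_symm_apply]
      exact hc
    · rintro ⟨y, hy, rfl⟩
      obtain ⟨c, hc⟩ := isConj_iff.mp hy
      exact isConj_iff.mpr ⟨b c, by rw [← map_inv, ← map_mul, ← map_mul, hc]⟩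
  rw [himg]
  exact hl.image _

lemma lam_torsionfree {l : W} (hl : l ∈ D.Lam) (h2 : l * l = 1) : l = 1 := by
  set lL : D.Lam := ⟨l, hl⟩ with hlL
  have h3 : lL * lL = 1 := Subtype.ext h2
  have h4 : D.freeIso lL * D.freeIso lL = 1 := by rw [← map_mul, h3, map_one]
  have h5 : Multiplicative.toAdd (D.freeIso lL) + Multiplicative.toAdd (D.freeIso lL) = 0 := by
    rw [← toAdd_mul, h4]
    rfl
  have h6 : Multiplicative.toAdd (D.freeIso lL) = 0 := by
    funext i
    have h7 : Multiplicative.toAdd (D.freeIso lL) i + Multiplicative.toAdd (D.freeIso lL) i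
        = 0 := by simpa using congrFun h5 i
    show Multiplicative.toAdd (D.freeIso lL) i = (0 : ℤ)
    omega
  have h8 : D.freeIso lL = 1 := by
    have := congrArg Multiplicative.ofAdd h6
    simpa using this
  have h9 : lL = 1 := D.freeIso.injective (by rw [h8, map_one])
  exact congrArg Subtype.val h9

lemma mem_Lam_of_centralizes {y : W} (h : ∀ l ∈ D.Lam, y * l = l * y) : y ∈ D.Lam := by
  rw [D.hLam_mem]
  haveI : D.Lam.FiniteIndex := D.hLam_index
  have hcongr : ∀ a b : W, (QuotientGroup.leftRel D.Lam) a b →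
      (fun g => g * y * g⁻¹) a = (fun g => g * y * g⁻¹) b := by
    intro a b hab
    rw [QuotientGroup.leftRel_apply] at hab
    have hyl : y * (a⁻¹ * b) = (a⁻¹ * b) * y := h _ hab
    show a * y * a⁻¹ = b * y * b⁻¹
    have hinner : (a⁻¹ * b) * y * (a⁻¹ * b)⁻¹ = y := by rw [← hyl]; group
    have hrhs : b * y * b⁻¹ = a * ((a⁻¹ * b) * y * (a⁻¹ * b)⁻¹) * a⁻¹ := by group
    rw [hrhs, hinner]
  set f : W ⧸ D.Lam → W := Quotient.lift (fun g => g * y * g⁻¹) hcongr with hf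
  have hsub : {x : W | IsConj y x} ⊆ Set.range f := by
    intro x hx
    obtain ⟨c, hc⟩ := isConj_iff.mp hx
    exact ⟨QuotientGroup.mk c, hc⟩
  exact (Set.finite_range f).subset hsub

/-! #### Lemmas on `pr` -/

lemma pr_unique {w u : W} (h1 : u ∈ Subgroup.closure (Set.range cs.simple \ {D.s0}))
    (h2 : w * u⁻¹ ∈ D.Lam) : D.pr w = u := by
  obtain ⟨v, hv, huniq⟩ := D.hs0_hyper w
  exact (huniq _ ⟨(D.hpr w).1, (D.hpr w).2⟩).trans (huniq u ⟨h1, h2⟩).symm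

lemma pr_mem (w : W) : D.pr w ∈ Subgroup.closure (Set.range cs.simple \ {D.s0}) := (D.hpr w).1

lemma pr_rel (w : W) : w * (D.pr w)⁻¹ ∈ D.Lam := (D.hpr w).2

lemma pr_eq_self {u : W} (hu : u ∈ Subgroup.closure (Set.range cs.simple \ {D.s0})) :
    D.pr u = u :=
  D.pr_unique hu (by rw [mul_inv_cancel]; exact one_mem _)

lemma pr_congr {w w' : W} (h : w * w'⁻¹ ∈ D.Lam) : D.pr w = D.pr w' := by
  refine D.pr_unique (D.pr_mem w') ?_
  have heq : w * (D.pr w')⁻¹ = (w * w'⁻¹) * (w' * (D.pr w')⁻¹) := by group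
  rw [heq]
  exact mul_mem h (D.pr_rel w')

/-! #### Lemmas on `iota` -/

lemma iota_mul (l l' : D.Lam) : D.iota (l * l') = D.iota l + D.iota l' := by
  funext i
  show ((Multiplicative.toAdd (D.freeIso (l * l'))) i : ℚ)
    = ((Multiplicative.toAdd (D.freeIso l)) i : ℚ)
      + ((Multiplicative.toAdd (D.freeIso l')) i : ℚ)
  rw [map_mul, toAdd_mul, Pi.add_apply, Int.cast_add]

lemma iota_one : D.iota (1 : D.Lam) = 0 := by
  funext i
  show ((Multiplicative.toAdd (D.freeIso (1 : D.Lam))) i : ℚ) = 0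
  rw [map_one]
  simp

lemma iota_inv (l : D.Lam) : D.iota l⁻¹ = - D.iota l := by
  have h := D.iota_mul l⁻¹ l
  rw [inv_mul_cancel, iota_one] at h
  funext i
  have h7 := congrFun h.symm i
  simp only [Pi.add_apply, Pi.zero_apply, Pi.neg_apply] at h7 ⊢
  linarith

lemma iota_eq_zero_iff {l : D.Lam} (h : D.iota l = 0) : l = 1 := by
  have h6 : Multiplicative.toAdd (D.freeIso l) = 0 := by
    funext i
    have h7 := congrFun h i
    show Multiplicative.toAdd (D.freeIso l) i = 0
    have : ((Multiplicative.toAdd (D.freeIso l) i : ℤ) : ℚ) = 0 := h7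
    exact_mod_cast this
  have h8 : D.freeIso l = 1 := by
    have := congrArg Multiplicative.ofAdd h6
    simpa using this
  exact D.freeIso.injective (by rw [h8, map_one])

end AffineData

/-! #### The semidirect product `W ⋊ Aut(W)` and the averaged cocycle `τ` -/

abbrev Gsd (W : Type) [Group W] : Type :=
  SemidirectProduct W (MulAut W) (MonoidHom.id (MulAut W))

def gact {W : Type} [Group W] (g : Gsd W) (y : W) : W := g.left * g.right y

lemma gact_mul {W : Type} [Group W] (g g' : Gsd W) (y : W) :
    gact (g * g') y = gact g (gact g' y) := by
  unfold gact
  rw [SemidirectProduct.mul_left, SemidirectProduct.mul_right]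
  simp only [MonoidHom.id_apply, MulAut.mul_apply]
  rw [map_mul, mul_assoc]

lemma gact_one {W : Type} [Group W] (y : W) : gact (1 : Gsd W) y = y := by
  unfold gact
  rw [SemidirectProduct.one_left, SemidirectProduct.one_right]
  simp

namespace AffineData

variable {cs : CoxeterSystem M W} (D : AffineData cs)

def gconj (g : Gsd W) (μ : D.Lam) : D.Lam :=
  ⟨g.left * g.right ↑μ * g.left⁻¹,
   D.hLam_normal.conj_mem _ (D.mem_Lam_map g.right μ.2) g.left⟩

lemma gconj_coe (g : Gsd W) (μ : D.Lam) :
    (D.gconj g μ : W) = g.left * g.right ↑μ * g.left⁻¹ := rfl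

lemma gconj_mul (g g' : Gsd W) (μ : D.Lam) :
    D.gconj (g * g') μ = D.gconj g (D.gconj g' μ) := by
  apply Subtype.ext
  rw [gconj_coe, gconj_coe, gconj_coe, SemidirectProduct.mul_left, SemidirectProduct.mul_right]
  simp only [MonoidHom.id_apply, MulAut.mul_apply]
  rw [map_mul, map_mul, map_inv]
  group

lemma gconj_one (μ : D.Lam) : D.gconj 1 μ = μ := by
  apply Subtype.ext
  rw [gconj_coe, SemidirectProduct.one_left, SemidirectProduct.one_right]
  simp

lemma gact_lam_mul (g : Gsd W) (μ : D.Lam) (y : W) :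
    gact g (↑μ * y) = ↑(D.gconj g μ) * gact g y := by
  unfold gact
  rw [map_mul, gconj_coe]
  group

noncomputable def cfun (g : Gsd W) (u : W) : D.Lam :=
  ⟨gact g u * (D.pr (gact g u))⁻¹, (D.hpr _).2⟩

lemma cfun_coe (g : Gsd W) (u : W) :
    (D.cfun g u : W) = gact g u * (D.pr (gact g u))⁻¹ := rfl

lemma gact_eq (g : Gsd W) (u : W) :
    gact g u = ↑(D.cfun g u) * D.pr (gact g u) := by
  rw [cfun_coe]
  group

lemma pr_gact_mul (g g' : Gsd W) (u : W) :
    D.pr (gact (g * g') u) = D.pr (gact g (D.pr (gact g' u))) := by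
  have h1 : gact (g * g') u
      = ↑(D.gconj g (D.cfun g' u)) * gact g (D.pr (gact g' u)) := by
    rw [gact_mul]
    conv_lhs => rw [D.gact_eq g' u]
    rw [D.gact_lam_mul]
  refine D.pr_congr ?_
  have h2 : gact (g * g') u * (gact g (D.pr (gact g' u)))⁻¹
      = ↑(D.gconj g (D.cfun g' u)) := by rw [h1]; group
  rw [h2]
  exact (D.gconj g (D.cfun g' u)).2

lemma cfun_mul (g g' : Gsd W) (u : W) :
    D.cfun (g * g') u = D.gconj g (D.cfun g' u) * D.cfun g (D.pr (gact g' u)) := by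
  apply Subtype.ext
  rw [cfun_coe]
  push_cast [cfun_coe, gconj_coe]
  rw [D.pr_gact_mul g g' u]
  have h1 : gact (g * g') u
      = ↑(D.gconj g (D.cfun g' u)) * gact g (D.pr (gact g' u)) := by
    rw [gact_mul]
    conv_lhs => rw [D.gact_eq g' u]
    rw [D.gact_lam_mul]
  rw [h1, gconj_coe, cfun_coe]
  group

lemma pr_gact_inv (g : Gsd W) {u : W}
    (hu : u ∈ Subgroup.closure (Set.range cs.simple \ {D.s0})) :
    D.pr (gact g⁻¹ (D.pr (gact g u))) = u := by
  have h1 : D.pr (gact g u) = (↑(D.cfun g u))⁻¹ * gact g u := by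
    rw [cfun_coe]; group
  have h2 : gact g⁻¹ (D.pr (gact g u))
      = ↑(D.gconj g⁻¹ (D.cfun g u)⁻¹) * u := by
    rw [h1, ← InvMemClass.coe_inv, D.gact_lam_mul, ← gact_mul, inv_mul_cancel, gact_one]
  rw [h2]
  have h4 : ↑(D.gconj g⁻¹ (D.cfun g u)⁻¹) * u * u⁻¹ ∈ D.Lam := by
    rw [mul_assoc, mul_inv_cancel, mul_one]
    exact (D.gconj g⁻¹ (D.cfun g u)⁻¹).2
  rw [D.pr_congr h4, D.pr_eq_self hu]

noncomputable def tauF (g : Gsd W) : Fin D.rank → ℚ :=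
  ∑ u ∈ D.hWJ_fin.toFinset, D.iota (D.cfun g u)

lemma tau_mul (g g' : Gsd W) (L : (Fin D.rank → ℚ) →ₗ[ℚ] (Fin D.rank → ℚ))
    (hL : ∀ μ : D.Lam, D.iota (D.gconj g μ) = L (D.iota μ)) :
    D.tauF (g * g') = L (D.tauF g') + D.tauF g := by
  unfold tauF
  have hsplit : ∀ u ∈ D.hWJ_fin.toFinset, D.iota (D.cfun (g * g') u)
      = L (D.iota (D.cfun g' u)) + D.iota (D.cfun g (D.pr (gact g' u))) := by
    intro u _
    rw [D.cfun_mul g g' u, D.iota_mul, hL]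
  rw [Finset.sum_congr rfl hsplit, Finset.sum_add_distrib]
  congr 1
  · rw [← map_sum]
  · refine Finset.sum_nbij' (fun u => D.pr (gact g' u)) (fun u => D.pr (gact g'⁻¹ u))
      ?_ ?_ ?_ ?_ ?_
    · intro u _
      exact D.hWJ_fin.mem_toFinset.mpr (D.pr_mem _)
    · intro u _
      exact D.hWJ_fin.mem_toFinset.mpr (D.pr_mem _)
    · intro u hu
      exact D.pr_gact_inv g' (D.hWJ_fin.mem_toFinset.mp hu)
    · intro u hu
      have h5 := D.pr_gact_inv g'⁻¹ (u := u) (D.hWJ_fin.mem_toFinset.mp hu)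
      rw [inv_inv] at h5
      exact h5
    · intro u _
      rfl

lemma tau_one : D.tauF (1 : Gsd W) = 0 := by
  unfold tauF
  have hz : ∀ u ∈ D.hWJ_fin.toFinset, D.iota (D.cfun (1 : Gsd W) u) = 0 := by
    intro u hu
    have h1 : D.cfun (1 : Gsd W) u = 1 := by
      apply Subtype.ext
      rw [cfun_coe, gact_one, D.pr_eq_self (D.hWJ_fin.mem_toFinset.mp hu), mul_inv_cancel]
      rfl
    rw [h1, D.iota_one]
  rw [Finset.sum_congr rfl hz, Finset.sum_const, smul_zero]

lemma tau_inl (y : W) : D.tauF (SemidirectProduct.inl y) =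
    (D.hWJ_fin.toFinset.card : ℚ) • D.iota ⟨y * (D.pr y)⁻¹, (D.hpr y).2⟩ := by
  unfold tauF
  have hv : ∀ u ∈ D.hWJ_fin.toFinset, D.iota (D.cfun (SemidirectProduct.inl y) u)
      = D.iota ⟨y * (D.pr y)⁻¹, (D.hpr y).2⟩ := by
    intro u hu
    have hcc : D.cfun (SemidirectProduct.inl y) u = ⟨y * (D.pr y)⁻¹, (D.hpr y).2⟩ := by
      apply Subtype.ext
      rw [cfun_coe]
      show _ = y * (D.pr y)⁻¹
      have hact : gact (SemidirectProduct.inl y) u = y * u := by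
        unfold gact
        rw [SemidirectProduct.left_inl, SemidirectProduct.right_inl]
        rfl
      have humem := D.hWJ_fin.mem_toFinset.mp hu
      have hpru : D.pr (y * u) = D.pr y * u := by
        have h6 : (y * u) * (D.pr y * u)⁻¹ ∈ D.Lam := by
          have h7 : (y * u) * (D.pr y * u)⁻¹ = y * (D.pr y)⁻¹ := by group
          rw [h7]
          exact (D.hpr y).2
        rw [D.pr_congr h6, D.pr_eq_self (mul_mem (D.pr_mem y) humem)]
      rw [hact, hpru]
      group
    rw [hcc]
  rw [Finset.sum_congr rfl hv, Finset.sum_const]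
  rw [← Nat.cast_smul_eq_nsmul ℚ]

end AffineData

end StarProofAux

/-- Conjugation by `*` inverts every element of `A_Λ`: for all `a ∈ A_Λ`,
one has `* ∘ a ∘ * = a⁻¹` in `Aut(W,S)`. -/
theorem star_conj_inverts_ALam (cs : CoxeterSystem M W) (D : AffineData cs) :
    ∀ a : MulAut W, D.InALam a → D.st * a * D.st = a⁻¹ := by
  intro a ha
  obtain ⟨hdiag, wa, hwamem, hwa⟩ := ha
  have hwamem' : wa ∈ Subgroup.closure (Set.range cs.simple \ {D.s0}) := hwamem
  have hwJmem := D.hwJ_mem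
  -- the elements of the semidirect product
  set k : Gsd W := ⟨(D.wJ)⁻¹, D.st⟩ with hkdef
  set hh : Gsd W := ⟨wa⁻¹, a⟩ with hhdef
  set m : Gsd W := k * hh * k * hh with hmdef
  set x : W := m.left with hxdef
  set z : MulAut W := m.right with hzdef
  have hkleft : k.left = (D.wJ)⁻¹ := by rw [hkdef]
  have hkright : k.right = D.st := by rw [hkdef]
  have hhleft : hh.left = wa⁻¹ := by rw [hhdef]
  have hhright : hh.right = a := by rw [hhdef]
  have hzval : z = D.st * a * D.st * a := by
    rw [hzdef, hmdef]
    rw [SemidirectProduct.mul_right, SemidirectProduct.mul_right, SemidirectProduct.mul_right,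
      hkright, hhright]
  -- conjugation data
  have hkconj : ∀ μ : D.Lam, D.gconj k μ = μ⁻¹ := by
    intro μ
    apply Subtype.ext
    rw [D.gconj_coe, hkleft, hkright, D.hst_Lam ↑μ μ.2]
    show (D.wJ)⁻¹ * (D.wJ * ↑μ * (D.wJ)⁻¹)⁻¹ * ((D.wJ)⁻¹)⁻¹ = (↑μ)⁻¹
    group
  have hhconj : ∀ μ : D.Lam, D.gconj hh μ = μ := by
    intro μ
    apply Subtype.ext
    rw [D.gconj_coe, hhleft, hhright, hwa ↑μ μ.2]
    group
  have hmconj : ∀ μ : D.Lam, D.gconj m μ = μ := by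
    intro μ
    rw [hmdef, D.gconj_mul, D.gconj_mul, D.gconj_mul, hhconj, hkconj, hhconj, hkconj, inv_inv]
  have hmiconj : ∀ μ : D.Lam, D.gconj m⁻¹ μ = μ := by
    intro μ
    have h1 := D.gconj_mul m m⁻¹ μ
    rw [mul_inv_cancel, D.gconj_one, hmconj (D.gconj m⁻¹ μ)] at h1
    exact h1.symm
  -- linearity data
  have hLk : ∀ μ : D.Lam, D.iota (D.gconj k μ)
      = (-(LinearMap.id : (Fin D.rank → ℚ) →ₗ[ℚ] (Fin D.rank → ℚ))) (D.iota μ) := by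
    intro μ
    rw [hkconj, D.iota_inv]
    simp
  have hLh : ∀ μ : D.Lam, D.iota (D.gconj hh μ)
      = (LinearMap.id : (Fin D.rank → ℚ) →ₗ[ℚ] (Fin D.rank → ℚ)) (D.iota μ) := by
    intro μ; rw [hhconj]; simp
  have hLm : ∀ μ : D.Lam, D.iota (D.gconj m μ)
      = (LinearMap.id : (Fin D.rank → ℚ) →ₗ[ℚ] (Fin D.rank → ℚ)) (D.iota μ) := by
    intro μ; rw [hmconj]; simp
  have hLmi : ∀ μ : D.Lam, D.iota (D.gconj m⁻¹ μ)
      = (LinearMap.id : (Fin D.rank → ℚ) →ₗ[ℚ] (Fin D.rank → ℚ)) (D.iota μ) := by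
    intro μ; rw [hmiconj]; simp
  have hLy : ∀ y : W, ∀ μ : D.Lam,
      D.iota (D.gconj (SemidirectProduct.inl y) μ) = D.rho y (D.iota μ) := by
    intro y μ
    exact (D.hrho y μ).symm
  -- τ values
  have htauk : D.tauF k = 0 := by
    unfold AffineData.tauF
    have hz : ∀ u ∈ D.hWJ_fin.toFinset, D.iota (D.cfun k u) = 0 := by
      intro u hu
      have humem := D.hWJ_fin.mem_toFinset.mp hu
      have hact : gact k u = u * D.wJ := by
        unfold gact
        rw [hkleft, hkright, D.hst_J u humem]
        group
      have h1 : D.cfun k u = 1 := by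
        apply Subtype.ext
        rw [D.cfun_coe, hact, D.pr_eq_self (mul_mem humem hwJmem), mul_inv_cancel]
        rfl
      rw [h1, D.iota_one]
    rw [Finset.sum_congr rfl hz, Finset.sum_const, smul_zero]
  have htaukX : ∀ g : Gsd W, D.tauF (k * g) = - D.tauF g := by
    intro g
    rw [D.tau_mul k g _ hLk, htauk, add_zero]
    simp
  have htauhX : ∀ g : Gsd W, D.tauF (hh * g) = D.tauF g + D.tauF hh := by
    intro g
    rw [D.tau_mul hh g _ hLh]
    simp
  have htaum : D.tauF m = 0 := by
    have hassoc : m = k * (hh * (k * hh)) := by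
      rw [hmdef, mul_assoc, mul_assoc]
    rw [hassoc, htaukX, htauhX, htaukX]
    ring
  have htaumi : D.tauF m⁻¹ = 0 := by
    have h1 := D.tau_mul m m⁻¹ _ hLm
    rw [mul_inv_cancel, D.tau_one, htaum, add_zero] at h1
    simpa using h1.symm
  -- m centralizes Λ
  have hcent : ∀ μ : D.Lam, x * z ↑μ * x⁻¹ = ↑μ := by
    intro μ
    have h1 := congrArg (Subtype.val) (hmconj μ)
    rw [D.gconj_coe] at h1
    exact h1
  -- key step : m commutes with inl W, i.e. z is conjugation by x⁻¹
  have key : ∀ y : W, x * z y * x⁻¹ * y⁻¹ = 1 := by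
    intro y
    set wy : W := x * z y * x⁻¹ * y⁻¹ with hwydef
    -- wy centralizes Λ
    have hwyc : ∀ l ∈ D.Lam, wy * l = l * wy := by
      intro l hl
      have hcmem : y⁻¹ * l * y ∈ D.Lam := by
        have := D.hLam_normal.conj_mem l hl y⁻¹
        simpa using this
      have h1 : x⁻¹ * (y⁻¹ * l * y) * x = z (y⁻¹ * l * y) := by
        have h2 := hcent ⟨y⁻¹ * l * y, hcmem⟩
        calc x⁻¹ * (y⁻¹ * l * y) * x
            = x⁻¹ * (x * z ((⟨y⁻¹ * l * y, hcmem⟩ : D.Lam) : W) * x⁻¹) * x := by rw [h2]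
          _ = z (y⁻¹ * l * y) := by group
      have h3 : z y * z (y⁻¹ * l * y) * (z y)⁻¹ = z l := by
        rw [← map_inv, ← map_mul, ← map_mul]
        congr 1
        group
      have h4 : x * z l * x⁻¹ = l := hcent ⟨l, hl⟩
      have h5 : wy * l * wy⁻¹ = l := by
        calc wy * l * wy⁻¹
            = x * z y * (x⁻¹ * (y⁻¹ * l * y) * x) * (z y)⁻¹ * x⁻¹ := by
              rw [hwydef]; group
          _ = x * z y * z (y⁻¹ * l * y) * (z y)⁻¹ * x⁻¹ := by rw [h1]
          _ = x * (z y * z (y⁻¹ * l * y) * (z y)⁻¹) * x⁻¹ := by group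
          _ = x * z l * x⁻¹ := by rw [h3]
          _ = l := h4
      calc wy * l = (wy * l * wy⁻¹) * wy := by group
        _ = l * wy := by rw [h5]
    have hwyLam : wy ∈ D.Lam := D.mem_Lam_of_centralizes hwyc
    -- n_y = inl wy
    have hny : m * SemidirectProduct.inl y * m⁻¹ * (SemidirectProduct.inl y)⁻¹
        = SemidirectProduct.inl wy := by
      have h6 : ((m * SemidirectProduct.inl y * m⁻¹ * (SemidirectProduct.inl y)⁻¹) : Gsd W).right
          = 1 := by
        simp only [SemidirectProduct.mul_right, SemidirectProduct.inv_right,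
          SemidirectProduct.right_inl]
        group
      have h7 : ((m * SemidirectProduct.inl y * m⁻¹ * (SemidirectProduct.inl y)⁻¹) : Gsd W).left
          = wy := by
        simp only [SemidirectProduct.mul_left, SemidirectProduct.inv_left,
          SemidirectProduct.mul_right, SemidirectProduct.right_inl, SemidirectProduct.left_inl,
          SemidirectProduct.inv_right, MonoidHom.id_apply, map_one, map_inv, mul_one, one_mul]
        rw [hwydef]
        have h8 : ∀ v : W, m.right (m.right⁻¹ v) = v := by
          intro v
          rw [← MulAut.mul_apply, mul_inv_cancel]
          rfl
        simp only [mul_inv_cancel, MulAut.one_apply, inv_one, one_mul, h8]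
        rfl
      calc m * SemidirectProduct.inl y * m⁻¹ * (SemidirectProduct.inl y)⁻¹
          = SemidirectProduct.inl
              ((m * SemidirectProduct.inl y * m⁻¹ * (SemidirectProduct.inl y)⁻¹).left)
            * SemidirectProduct.inr
              ((m * SemidirectProduct.inl y * m⁻¹ * (SemidirectProduct.inl y)⁻¹).right) :=
            (SemidirectProduct.inl_left_mul_inr_right _).symm
        _ = SemidirectProduct.inl wy := by rw [h6, h7, map_one, mul_one]
    -- τ(n_y) = 0
    have htn : D.tauF (SemidirectProduct.inl wy) = 0 := by
      rw [← hny]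
      have hassoc2 : m * SemidirectProduct.inl y * m⁻¹ * (SemidirectProduct.inl y)⁻¹
          = m * (SemidirectProduct.inl y * (m⁻¹ * (SemidirectProduct.inl y)⁻¹)) := by
        rw [mul_assoc, mul_assoc]
      rw [hassoc2, D.tau_mul m _ _ hLm, D.tau_mul (SemidirectProduct.inl y) _ _ (hLy y),
        D.tau_mul m⁻¹ _ _ hLmi, htaumi, htaum]
      have hinv : (SemidirectProduct.inl y⁻¹ : Gsd W) = (SemidirectProduct.inl y)⁻¹ :=
        map_inv _ y
      have hzero : (D.rho y) (D.tauF ((SemidirectProduct.inl y)⁻¹))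
          + D.tauF (SemidirectProduct.inl y) = 0 := by
        have h9 := D.tau_mul (SemidirectProduct.inl y) ((SemidirectProduct.inl y)⁻¹)
          (D.rho y) (hLy y)
        rw [mul_inv_cancel, D.tau_one] at h9
        exact h9.symm
      simp only [LinearMap.id_coe, id_eq, add_zero]
      exact hzero
    -- conclude wy = 1
    rw [D.tau_inl wy] at htn
    have hcard : (D.hWJ_fin.toFinset.card : ℚ) ≠ 0 := by
      have h1 : (1 : W) ∈ D.hWJ_fin.toFinset := D.hWJ_fin.mem_toFinset.mpr (one_mem _)
      have h2 : D.hWJ_fin.toFinset.card ≠ 0 := Finset.card_ne_zero_of_mem h1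
      exact_mod_cast h2
    have hiz : D.iota ⟨wy * (D.pr wy)⁻¹, (D.hpr wy).2⟩ = 0 := by
      rcases smul_eq_zero.mp htn with h1 | h1
      · exact absurd h1 hcard
      · exact h1
    have hw1 : (⟨wy * (D.pr wy)⁻¹, (D.hpr wy).2⟩ : D.Lam) = 1 := D.iota_eq_zero_iff hiz
    have hpr1 : D.pr wy = 1 := by
      have h1 : wy * (1 : W)⁻¹ ∈ D.Lam := by simpa using hwyLam
      rw [D.pr_congr h1, D.pr_eq_self (one_mem _)]
    have h2 : wy * (D.pr wy)⁻¹ = 1 := congrArg Subtype.val hw1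
    rw [hpr1] at h2
    simpa using h2
  -- z y = x⁻¹ * y * x
  have hzy : ∀ y : W, z y = x⁻¹ * y * x := by
    intro y
    have h3 := key y
    have h2 : x * z y * x⁻¹ = y := by
      calc x * z y * x⁻¹ = (x * z y * x⁻¹ * y⁻¹) * y := by group
        _ = 1 * y := by rw [h3]
        _ = y := one_mul y
    calc z y = x⁻¹ * (x * z y * x⁻¹) * x := by group
      _ = x⁻¹ * y * x := by rw [h2]
  -- images of the simple system
  have hstimg : (⇑D.st) '' (Set.range cs.simple) = Set.range cs.simple := by
    apply Set.Subset.antisymm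
    · rintro _ ⟨s, hs, rfl⟩
      exact D.hst_S s hs
    · intro s hs
      exact ⟨D.st s, D.hst_S s hs, D.hst_inv s⟩
  have hzimg : (⇑z) '' (Set.range cs.simple) = Set.range cs.simple := by
    have hcz : ∀ y : W, z y = D.st (a (D.st (a y))) := by
      intro y
      rw [hzval]
      rfl
    have hfun : (⇑z) = (⇑D.st) ∘ (⇑a) ∘ (⇑D.st) ∘ (⇑a) := funext hcz
    rw [hfun, Set.image_comp, Set.image_comp, Set.image_comp, hdiag, hstimg, hdiag, hstimg]
  -- x⁻¹ normalizes the simple system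
  have hgS : ∀ i : B, ∃ j : B, x⁻¹ * cs.simple i * (x⁻¹)⁻¹ = cs.simple j := by
    intro i
    have h1 : z (cs.simple i) ∈ Set.range cs.simple := by
      rw [← hzimg]
      exact ⟨cs.simple i, ⟨i, rfl⟩, rfl⟩
    obtain ⟨j, hj⟩ := h1
    refine ⟨j, ?_⟩
    rw [inv_inv, ← hzy]
    exact hj.symm
  have hgS' : ∀ i : B, ∃ j : B, (x⁻¹)⁻¹ * cs.simple i * x⁻¹ = cs.simple j := by
    intro i
    have h1 : cs.simple i ∈ (⇑z) '' (Set.range cs.simple) := by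
      rw [hzimg]; exact ⟨i, rfl⟩
    obtain ⟨s, ⟨j, rfl⟩, hs⟩ := h1
    refine ⟨j, ?_⟩
    rw [inv_inv]
    rw [hzy] at hs
    calc x * cs.simple i * x⁻¹ = x * (x⁻¹ * cs.simple j * x) * x⁻¹ := by rw [hs]
      _ = cs.simple j := by group
  -- conclusion
  have hx1 : x⁻¹ = 1 := by
    by_contra hx1
    obtain ⟨i, hfin⟩ := LYAux.exists_finite_class_of_normalizes cs hgS hgS' hx1
    have hsLam : cs.simple i ∈ D.Lam := (D.hLam_mem _).mpr hfin
    have hs1 : cs.simple i = 1 := D.lam_torsionfree hsLam (cs.simple_mul_simple_self i)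
    have hlen := cs.length_simple i
    rw [hs1, cs.length_one] at hlen
    omega
  have hxone : x = 1 := by
    rw [← inv_inv x, hx1, inv_one]
  have hz1 : D.st * a * D.st * a = 1 := by
    rw [← hzval]
    apply MulEquiv.ext
    intro y
    rw [hzy y, hxone]
    simp
  calc D.st * a * D.st = (D.st * a * D.st * a) * a⁻¹ := by group
    _ = a⁻¹ := by rw [hz1, one_mul]

end LY
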